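/- arXiv:1708.01902 — 4 statements merged into one kernel-verified Lean document; each statement's English description precedes it below -/
import Mathlib

section
/- Let $z_1, \ldots, z_{n+1}$ be exchangeable random variables taking values in a measurable space $\mathbf{Z}$ (i.e., their joint distribution is invariant under all permutations of indices), and let $\alpha_i := A(z_1,\ldots,z_{i-1},z_{i+1},\ldots,z_{n+1},z_i)$ for $i = 1,\ldots,n+1$, where $A : \mathbf{Z}^{n+1} \to \mathbb{R}$ is measurable and invariant under permutations of its first $n$ arguments. Let $\tau$ be uniform on $[0,1]$ independent of $(z_1,\ldots,z_{n+1})$. Then the random variable $U := \frac{1}{n+1}\left(|\{i : \alpha_i < \alpha_{n+1}\}| + \tau|\{i : \alpha_i = \alpha_{n+1}\}|\right)$ is uniformly distributed on $[0,1]$: for all $\alpha \in [0,1]$, $P(U \le \alpha) = \alpha$. -/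
open MeasureTheory ProbabilityTheory Finset
open scoped ENNReal

lemma comb_aux {n : ℕ} (β : Fin (n+1) → ℝ) (c : ℝ) (hc0 : 0 ≤ c) (hc1 : c ≤ n+1) :
    ∑ k : Fin (n+1),
      (min c ((#(univ.filter fun j => β j < β k) : ℝ) + (#(univ.filter fun j => β j = β k) : ℝ))
        - min c (#(univ.filter fun j => β j < β k))) / (#(univ.filter fun j => β j = β k) : ℝ)
      = c := by
  classical
  set ℓ : ℝ → ℕ := fun v => #(univ.filter fun j => β j < v) with hℓ
  set e : ℝ → ℕ := fun v => #(univ.filter fun j => β j = v) with he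
  have hsum1 : ∑ k : Fin (n+1),
      (min c ((ℓ (β k) : ℝ) + (e (β k) : ℝ)) - min c (ℓ (β k))) / (e (β k) : ℝ)
      = ∑ v ∈ univ.image β, (#(univ.filter fun k => β k = v)) •
          ((min c ((ℓ v : ℝ) + (e v : ℝ)) - min c (ℓ v)) / (e v : ℝ)) :=
    Finset.sum_comp (fun v => (min c ((ℓ v : ℝ) + (e v : ℝ)) - min c (ℓ v)) / (e v : ℝ)) β
  set T := univ.image β with hT
  have hmem_e : ∀ v ∈ T, 1 ≤ e v := by
    intro v hv
    obtain ⟨k, -, hk⟩ := Finset.mem_image.1 hv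
    have : k ∈ univ.filter fun j => β j = v := by simp [hk]
    exact Finset.card_pos.2 ⟨k, this⟩
  have hsum2 : ∑ v ∈ T, (#(univ.filter fun k => β k = v)) •
          ((min c ((ℓ v : ℝ) + (e v : ℝ)) - min c (ℓ v)) / (e v : ℝ))
      = ∑ v ∈ T, (min c ((ℓ v : ℝ) + (e v : ℝ)) - min c (ℓ v)) := by
    refine Finset.sum_congr rfl fun v hv => ?_
    have h1 : (#(univ.filter fun k => β k = v)) = e v := rfl
    have h2 : (e v : ℝ) ≠ 0 := by
      have := hmem_e v hv; positivity
    rw [h1, nsmul_eq_mul, mul_div_assoc', mul_comm, mul_div_assoc, div_self h2, mul_one]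
  set m := T.card with hm
  have hm0 : 0 < m := Finset.card_pos.2 ⟨β 0, Finset.mem_image.2 ⟨0, mem_univ _, rfl⟩⟩
  set iso := T.orderIsoOfFin rfl with hiso
  set N : ℕ → ℕ := fun i => if h : i < m then ℓ (iso ⟨i, h⟩) else (n+1) with hN
  have key : ∀ (i : ℕ) (h : i < m), (ℓ (iso ⟨i,h⟩) : ℕ) + e (iso ⟨i,h⟩) = N (i+1) := by
    intro i h
    have hle : ℓ (iso ⟨i,h⟩) + e (iso ⟨i,h⟩) = #(univ.filter fun j => β j ≤ (iso ⟨i,h⟩ : ℝ)) := by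
      rw [hℓ, he]
      rw [← Finset.card_union_of_disjoint]
      · congr 1
        ext j
        simp only [Finset.mem_union, Finset.mem_filter, mem_univ, true_and]
        exact (le_iff_lt_or_eq).symm
      · rw [Finset.disjoint_left]
        intro j hj1 hj2
        simp only [Finset.mem_filter] at hj1 hj2
        exact absurd hj2.2 (ne_of_lt hj1.2)
    rw [hle]
    by_cases h2 : i + 1 < m
    · have : (univ.filter fun j => β j ≤ (iso ⟨i,h⟩ : ℝ))
          = univ.filter fun j => β j < (iso ⟨i+1,h2⟩ : ℝ) := by
        ext j
        simp only [Finset.mem_filter, mem_univ, true_and]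
        constructor
        · intro hj
          have : (iso ⟨i,h⟩ : ℝ) < iso ⟨i+1,h2⟩ := by
            exact iso.lt_iff_lt.2 (by simp)
          exact lt_of_le_of_lt hj this
        · intro hj
          have hmemT : β j ∈ T := Finset.mem_image.2 ⟨j, mem_univ _, rfl⟩
          set r := iso.symm ⟨β j, hmemT⟩ with hr
          have hval : (iso r : ℝ) = β j := by rw [hr]; simp
          have hlt : iso r < iso ⟨i+1, h2⟩ := by
            rw [← Subtype.coe_lt_coe, hval]; exact hj
          have hrlt : r < ⟨i+1, h2⟩ := iso.lt_iff_lt.1 hlt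
          have : r ≤ ⟨i, h⟩ := by
            rcases r with ⟨rv, hrv⟩
            simp only [Fin.lt_def] at hrlt
            exact Fin.mk_le_mk.2 (Nat.lt_succ_iff.1 hrlt)
          have h4 : (iso r : ℝ) ≤ (iso ⟨i, h⟩ : ℝ) := Subtype.coe_le_coe.2 (iso.le_iff_le.2 this)
          rw [hval] at h4
          exact h4
      rw [this, hN]
      simp [h2]
      rfl
    · have : (univ.filter fun j => β j ≤ (iso ⟨i,h⟩ : ℝ)) = (univ : Finset (Fin (n+1))) := by
        ext j
        simp only [Finset.mem_filter, mem_univ, true_and, iff_true]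
        have hmemT : β j ∈ T := Finset.mem_image.2 ⟨j, mem_univ _, rfl⟩
        set r := iso.symm ⟨β j, hmemT⟩ with hr
        have hval : (iso r : ℝ) = β j := by rw [hr]; simp
        have : r ≤ ⟨i, h⟩ := by
          rcases r with ⟨rv, hrv⟩
          have : rv < i + 1 := lt_of_lt_of_le hrv (not_lt.1 h2)
          exact Fin.mk_le_mk.2 (Nat.lt_succ_iff.1 this)
        have h4 : (iso r : ℝ) ≤ (iso ⟨i, h⟩ : ℝ) := Subtype.coe_le_coe.2 (iso.le_iff_le.2 this)
        rw [hval] at h4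
        exact h4
      rw [this, hN]
      have : ¬ (i + 1 < m) := h2
      simp only [this, dif_neg, not_false_iff]
      simp [Finset.card_univ]
  have hN0 : N 0 = 0 := by
    rw [hN]
    simp only [hm0, dif_pos]
    rw [hℓ]
    rw [Finset.card_eq_zero]
    rw [Finset.filter_eq_empty_iff]
    intro j _
    have hmemT : β j ∈ T := Finset.mem_image.2 ⟨j, mem_univ _, rfl⟩
    set r := iso.symm ⟨β j, hmemT⟩ with hr
    have hval : (iso r : ℝ) = β j := by rw [hr]; simp
    have h0 : (⟨0, hm0⟩ : Fin m) ≤ r := Fin.mk_le_mk.2 (Nat.zero_le _)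
    have h4 : (iso ⟨0, hm0⟩ : ℝ) ≤ (iso r : ℝ) := Subtype.coe_le_coe.2 (iso.le_iff_le.2 h0)
    rw [hval] at h4
    exact not_lt.2 h4
  have hNm : N m = n + 1 := by rw [hN]; simp
  have hsum3 : ∑ v ∈ T, (min c ((ℓ v : ℝ) + (e v : ℝ)) - min c (ℓ v))
      = ∑ i : Fin m, (min c ((ℓ (iso i) : ℝ) + (e (iso i) : ℝ)) - min c (ℓ (iso i))) := by
    rw [← Finset.sum_coe_sort T]
    exact (Equiv.sum_comp iso.toEquiv
      (fun x : {x // x ∈ T} => (min c ((ℓ (x : ℝ) : ℝ) + (e (x : ℝ) : ℝ)) - min c (ℓ (x : ℝ))))).symm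
  have hterm : ∀ i : Fin m,
      (min c ((ℓ (iso i) : ℝ) + (e (iso i) : ℝ)) - min c (ℓ (iso i)))
      = min c (N ((i : ℕ)+1) : ℝ) - min c (N (i : ℕ) : ℝ) := by
    intro i
    have h1 : ℓ (iso i) = N (i : ℕ) := by
      rw [hN]; simp only [i.isLt, dif_pos, Fin.eta]
    have h2 : ((ℓ (iso i) : ℝ) + (e (iso i) : ℝ)) = (N ((i:ℕ)+1) : ℝ) := by
      rw [← Nat.cast_add]
      exact_mod_cast congrArg (Nat.cast : ℕ → ℝ) (by simpa [Fin.eta] using key (i : ℕ) i.isLt)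
    rw [h2, h1]
  have hsum4 : ∑ i : Fin m, (min c ((ℓ (iso i) : ℝ) + (e (iso i) : ℝ)) - min c (ℓ (iso i)))
      = ∑ i ∈ Finset.range m, (min c (N (i+1) : ℝ) - min c (N i : ℝ)) := by
    rw [Finset.sum_congr rfl (fun i _ => hterm i)]
    exact Fin.sum_univ_eq_sum_range (fun i => min c (N (i+1) : ℝ) - min c (N i : ℝ)) m
  have hsum5 : ∑ i ∈ Finset.range m, (min c (N (i+1) : ℝ) - min c (N i : ℝ))
      = min c (N m : ℝ) - min c (N 0 : ℝ) :=
    Finset.sum_range_sub (fun i => min c (N i : ℝ)) m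
  rw [hsum1, hsum2, hsum3, hsum4, hsum5, hN0, hNm]
  push_cast
  rw [min_eq_left hc1, min_eq_right hc0, sub_zero]

lemma exists_perm_succAbove {n : ℕ} (π : Equiv.Perm (Fin (n+1))) (i : Fin (n+1)) :
    ∃ σ : Equiv.Perm (Fin n), ∀ j, π (i.succAbove j) = (π i).succAbove (σ j) := by
  set g : Fin n → Fin (n+1) := fun j => π (i.succAbove j) with hg
  set h : Fin n → Fin (n+1) := fun j => (π i).succAbove j with hh
  have hginj : Function.Injective g := fun a b hab =>
    (Fin.succAbove_right_injective (p := i)) (π.injective hab)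
  have hhinj : Function.Injective h := Fin.succAbove_right_injective
  have hrange : Set.range g = Set.range h := by
    rw [hg, hh]
    have : Set.range (fun j => π (i.succAbove j)) = π '' Set.range i.succAbove := by
      rw [← Set.range_comp]; rfl
    rw [this, Fin.range_succAbove, Fin.range_succAbove]
    ext x
    simp only [Set.mem_image, Set.mem_compl_iff, Set.mem_singleton_iff]
    constructor
    · rintro ⟨y, hy, rfl⟩
      exact fun hc => hy (π.injective hc)
    · intro hx
      exact ⟨π.symm x, fun hc => hx (by rw [← hc]; simp), by simp⟩
  let σ : Equiv.Perm (Fin n) :=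
    ((Equiv.ofInjective g hginj).trans (Equiv.setCongr hrange)).trans
      (Equiv.ofInjective h hhinj).symm
  refine ⟨σ, fun j => ?_⟩
  show g j = h (σ j)
  have : h (σ j) = ((Equiv.setCongr hrange) (Equiv.ofInjective g hginj j) : Fin (n+1)) :=
    Equiv.apply_ofInjective_symm hhinj _
  rw [this]
  rfl

lemma nu_Iic (x : ℝ) :
    (volume.restrict (Set.Icc (0:ℝ) 1)) (Set.Iic x) = ENNReal.ofReal (min x 1) := by
  rw [Measure.restrict_apply measurableSet_Iic]
  have : Set.Iic x ∩ Set.Icc (0:ℝ) 1 = Set.Icc 0 (min x 1) := by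
    ext t
    simp only [Set.mem_inter_iff, Set.mem_Iic, Set.mem_Icc]
    constructor
    · rintro ⟨h1, h2, h3⟩; exact ⟨h2, le_min h1 h3⟩
    · rintro ⟨h1, h2⟩; exact ⟨(le_min_iff.1 h2).1, h1, (le_min_iff.1 h2).2⟩
  rw [this, Real.volume_Icc, sub_zero]

lemma ofReal_min_div (c L E : ℝ) (hE : 0 < E) :
    ENNReal.ofReal (min ((c - L)/E) 1) = ENNReal.ofReal ((min c (L+E) - min c L)/E) := by
  rcases le_or_gt c L with h | h
  · have h1 : min c (L+E) = c := min_eq_left (by linarith)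
    have h2 : min c L = c := min_eq_left h
    rw [h1, h2, sub_self, zero_div, ENNReal.ofReal_zero]
    refine ENNReal.ofReal_eq_zero.2 ?_
    have hd : (c - L)/E ≤ 0 := div_nonpos_of_nonpos_of_nonneg (by linarith) hE.le
    exact le_trans (min_le_left _ _) hd
  · rcases le_or_gt c (L+E) with h2 | h2
    · rw [min_eq_left h2, min_eq_right h.le, min_eq_left]
      rw [div_le_one hE]; linarith
    · rw [min_eq_right (by linarith : L + E ≤ c), min_eq_right h.le, min_eq_right]
      · rw [add_sub_cancel_left, div_self hE.ne']
      · rw [le_div_iff₀ hE]; linarith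

/-- Validity (R2) of smoothed conformal transducers: for exchangeable
observations `z 0, …, z n`, a conformity measure `A` invariant under
permutations of its first `n` arguments, and an independent uniform `τ`,
the smoothed conformal p-value `U` is uniformly distributed on `[0,1]`. -/
theorem stmt_6 {Ω Z : Type*} [MeasurableSpace Ω] [MeasurableSpace Z]
    (P : Measure Ω) [IsProbabilityMeasure P] (n : ℕ)
    (z : Fin (n + 1) → Ω → Z) (hz : ∀ i, Measurable (z i))
    (hexch : ∀ π : Equiv.Perm (Fin (n + 1)),
      Measure.map (fun ω => fun i => z (π i) ω) P = Measure.map (fun ω => fun i => z i ω) P)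
    (A : (Fin n → Z) → Z → ℝ) (hA : Measurable (fun p : (Fin n → Z) × Z => A p.1 p.2))
    (hAinv : ∀ (s : Fin n → Z) (w : Z) (π : Equiv.Perm (Fin n)), A (s ∘ π) w = A s w)
    (τ : Ω → ℝ) (hτ : Measurable τ)
    (hτunif : Measure.map τ P = volume.restrict (Set.Icc (0 : ℝ) 1))
    (hindep : IndepFun (fun ω => fun i => z i ω) τ P)
    (α : Fin (n + 1) → Ω → ℝ)
    (hα : ∀ (i : Fin (n + 1)) (ω : Ω),
      α i ω = A (fun j : Fin n => z (i.succAbove j) ω) (z i ω))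
    (U : Ω → ℝ)
    (hU : ∀ ω, U ω =
      (((univ.filter (fun i => α i ω < α (Fin.last n) ω)).card : ℝ) +
        τ ω * ((univ.filter (fun i => α i ω = α (Fin.last n) ω)).card : ℝ)) / (n + 1)) :
    ∀ a : ℝ, a ∈ Set.Icc (0 : ℝ) 1 → P {ω | U ω ≤ a} = ENNReal.ofReal a := by
  intro a ha
  obtain ⟨ha0, ha1⟩ := ha
  -- setup
  set vecz : Ω → (Fin (n+1) → Z) := fun ω i => z i ω with hvecz
  have hveczm : Measurable vecz := measurable_pi_lambda _ (fun i => hz i)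
  set g : Fin (n+1) → (Fin (n+1) → Z) → ℝ :=
    fun i v => A (fun j => v (i.succAbove j)) (v i) with hgdef
  have hgm : ∀ i, Measurable (g i) := by
    intro i
    have h1 : Measurable (fun v : Fin (n+1) → Z =>
        ((fun j => v (i.succAbove j) : Fin n → Z), v i)) :=
      (measurable_pi_lambda _ (fun j => measurable_pi_apply (i.succAbove j))).prodMk
        (measurable_pi_apply i)
    exact hA.comp h1
  -- the g i (v ∘ π) = g (π i) v identity
  have hgperm : ∀ (π : Equiv.Perm (Fin (n+1))) (i : Fin (n+1)) (v : Fin (n+1) → Z),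
      g i (v ∘ π) = g (π i) v := by
    intro π i v
    obtain ⟨σ, hσ⟩ := exists_perm_succAbove π i
    rw [hgdef]
    show A (fun j => v (π (i.succAbove j))) (v (π i))
      = A (fun j => v ((π i).succAbove j)) (v (π i))
    have : (fun j => v (π (i.succAbove j)))
        = (fun j => v ((π i).succAbove j)) ∘ σ := by
      funext j; simp [hσ j]
    rw [this, hAinv]
  -- measurable card functions
  have hcard_lt : ∀ k, Measurable
      (fun v => (#(univ.filter fun i => g i v < g k v) : ℝ)) := by
    intro k
    have heq : (fun v => (#(univ.filter fun i => g i v < g k v) : ℝ))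
        = fun v => ∑ i : Fin (n+1), if g i v < g k v then (1:ℝ) else 0 := by
      funext v
      rw [Finset.card_filter]
      push_cast
      rfl
    rw [heq]
    exact Finset.measurable_sum _ fun i _ =>
      Measurable.ite (measurableSet_lt (hgm i) (hgm k)) measurable_const measurable_const
  have hcard_eq : ∀ k, Measurable
      (fun v => (#(univ.filter fun i => g i v = g k v) : ℝ)) := by
    intro k
    have heq : (fun v => (#(univ.filter fun i => g i v = g k v) : ℝ))
        = fun v => ∑ i : Fin (n+1), if g i v = g k v then (1:ℝ) else 0 := by
      funext v
      rw [Finset.card_filter]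
      push_cast
      rfl
    rw [heq]
    exact Finset.measurable_sum _ fun i _ =>
      Measurable.ite (measurableSet_eq_fun (hgm i) (hgm k)) measurable_const measurable_const
  -- the family of p-value functions
  set G : Fin (n+1) → ((Fin (n+1) → Z) × ℝ) → ℝ :=
    fun k p => ((#(univ.filter fun i => g i p.1 < g k p.1) : ℝ)
      + p.2 * (#(univ.filter fun i => g i p.1 = g k p.1) : ℝ)) / (n+1) with hGdef
  have hGm : ∀ k, Measurable (G k) := by
    intro k
    exact (((hcard_lt k).comp measurable_fst).add
      (measurable_snd.mul ((hcard_eq k).comp measurable_fst))).div_const _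
  have hGset : ∀ k, MeasurableSet {p : (Fin (n+1) → Z) × ℝ | G k p ≤ a} :=
    fun k => measurableSet_le (hGm k) measurable_const
  -- the measures
  set μ : Measure (Fin (n+1) → Z) := Measure.map vecz P with hμdef
  set ν : Measure ℝ := volume.restrict (Set.Icc (0:ℝ) 1) with hνdef
  haveI : IsProbabilityMeasure μ := Measure.isProbabilityMeasure_map hveczm.aemeasurable
  haveI : IsProbabilityMeasure ν := by
    constructor
    rw [hνdef, Measure.restrict_apply MeasurableSet.univ, Set.univ_inter, Real.volume_Icc]
    norm_num
  have hpair : Measure.map (fun ω => (vecz ω, τ ω)) P = μ.prod ν := by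
    rw [hμdef, ← hτunif]
    exact (indepFun_iff_map_prod_eq_prod_map_map hveczm.aemeasurable hτ.aemeasurable).1 hindep
  have hμinv : ∀ π : Equiv.Perm (Fin (n+1)),
      Measure.map (fun v => v ∘ π) μ = μ := by
    intro π
    have hm : Measurable (fun v : Fin (n+1) → Z => v ∘ π) :=
      measurable_pi_lambda _ fun j => measurable_pi_apply _
    rw [hμdef, Measure.map_map hm hveczm]
    exact hexch π
  have hprodinv : ∀ π : Equiv.Perm (Fin (n+1)),
      Measure.map (fun p : (Fin (n+1) → Z) × ℝ => (p.1 ∘ π, p.2)) (μ.prod ν) = μ.prod ν := by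
    intro π
    have hm : Measurable (fun v : Fin (n+1) → Z => v ∘ π) :=
      measurable_pi_lambda _ fun j => measurable_pi_apply _
    have h1 := Measure.map_prod_map (f := fun v : Fin (n+1) → Z => v ∘ π)
      (g := id (α := ℝ)) μ ν hm measurable_id
    rw [Measure.map_id, hμinv π] at h1
    have h2 : (Prod.map (fun v : Fin (n+1) → Z => v ∘ π) (id : ℝ → ℝ))
        = fun p : (Fin (n+1) → Z) × ℝ => (p.1 ∘ π, p.2) := rfl
    rw [h2] at h1
    exact h1.symm
  -- U in terms of G (Fin.last n)
  have hUF : ∀ ω, U ω = G (Fin.last n) (vecz ω, τ ω) := by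
    intro ω
    rw [hU ω, hGdef]
    have hgα : ∀ i, g i (vecz ω) = α i ω := fun i => (hα i ω).symm
    simp only [hgα]
  have hX : P {ω | U ω ≤ a} = (μ.prod ν) {p | G (Fin.last n) p ≤ a} := by
    have hpre : {ω | U ω ≤ a} = (fun ω => (vecz ω, τ ω)) ⁻¹' {p | G (Fin.last n) p ≤ a} := by
      ext ω
      simp only [Set.mem_setOf_eq, Set.mem_preimage, hUF ω]
    rw [hpre, ← Measure.map_apply (hveczm.prodMk hτ) (hGset _), hpair]
  -- the k-th representation
  have hXk : ∀ k : Fin (n+1),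
      (μ.prod ν) {p | G (Fin.last n) p ≤ a} = (μ.prod ν) {p | G k p ≤ a} := by
    intro k
    set π := Equiv.swap k (Fin.last n) with hπ
    have hm : Measurable (fun p : (Fin (n+1) → Z) × ℝ => (p.1 ∘ π, p.2)) :=
      (measurable_pi_lambda _ (fun j => (measurable_pi_apply _).comp measurable_fst)).prodMk
        measurable_snd
    have h1 := Measure.map_apply (μ := μ.prod ν) hm (hGset (Fin.last n))
    rw [hprodinv π] at h1
    rw [h1]
    congr 1
    ext p
    simp only [Set.mem_preimage, Set.mem_setOf_eq]
    have hGcomp : G (Fin.last n) (p.1 ∘ π, p.2) = G k p := by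
      rw [hGdef]
      simp only
      have hcl : #(univ.filter fun i => g i (p.1 ∘ π) < g (Fin.last n) (p.1 ∘ π))
          = #(univ.filter fun i => g i p.1 < g k p.1) := by
        have hc1 : (univ.filter fun i => g i (p.1 ∘ π) < g (Fin.last n) (p.1 ∘ π))
            = univ.filter fun i => g (π i) p.1 < g k p.1 := by
          apply Finset.filter_congr
          intro i _
          rw [hgperm π i p.1, hgperm π (Fin.last n) p.1, hπ, Equiv.swap_apply_right]
        rw [hc1, Finset.card_filter, Finset.card_filter]
        exact Equiv.sum_comp π (fun i => if g i p.1 < g k p.1 then 1 else 0)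
      have hce : #(univ.filter fun i => g i (p.1 ∘ π) = g (Fin.last n) (p.1 ∘ π))
          = #(univ.filter fun i => g i p.1 = g k p.1) := by
        have hc1 : (univ.filter fun i => g i (p.1 ∘ π) = g (Fin.last n) (p.1 ∘ π))
            = univ.filter fun i => g (π i) p.1 = g k p.1 := by
          apply Finset.filter_congr
          intro i _
          rw [hgperm π i p.1, hgperm π (Fin.last n) p.1, hπ, Equiv.swap_apply_right]
        rw [hc1, Finset.card_filter, Finset.card_filter]
        exact Equiv.sum_comp π (fun i => if g i p.1 = g k p.1 then 1 else 0)
      rw [hcl, hce]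
    rw [hGcomp]
  -- slice computation
  set c : ℝ := a * (n+1) with hc
  have hc0 : 0 ≤ c := by positivity
  have hc1 : c ≤ n + 1 := by
    rw [hc]
    nlinarith [ha1, (by positivity : (0:ℝ) ≤ (n:ℝ)+1)]
  have hslice : ∀ v : Fin (n+1) → Z,
      ∑ k : Fin (n+1), ν {t | G k (v, t) ≤ a} = ENNReal.ofReal c := by
    intro v
    have hterm : ∀ k : Fin (n+1), ν {t | G k (v, t) ≤ a}
        = ENNReal.ofReal ((min c ((#(univ.filter fun j => g j v < g k v) : ℝ)
            + (#(univ.filter fun j => g j v = g k v) : ℝ))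
          - min c (#(univ.filter fun j => g j v < g k v) : ℝ))
          / (#(univ.filter fun j => g j v = g k v) : ℝ)) := by
      intro k
      set L : ℝ := (#(univ.filter fun j => g j v < g k v) : ℝ) with hL
      set E : ℝ := (#(univ.filter fun j => g j v = g k v) : ℝ) with hE
      have hE1 : (1:ℝ) ≤ E := by
        rw [hE]
        have : k ∈ univ.filter fun j => g j v = g k v := by simp
        exact_mod_cast Finset.card_pos.2 ⟨k, this⟩
      have hEpos : (0:ℝ) < E := lt_of_lt_of_le one_pos hE1
      have hsetIic : {t : ℝ | G k (v, t) ≤ a} = Set.Iic ((c - L)/E) := by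
        ext t
        simp only [Set.mem_setOf_eq, Set.mem_Iic, hGdef]
        rw [div_le_iff₀ (by positivity : (0:ℝ) < (n:ℝ)+1)]
        rw [le_div_iff₀ hEpos]
        constructor
        · intro h; rw [hc]; linarith
        · intro h; rw [hc] at h; linarith
      rw [hsetIic, hνdef, nu_Iic, ofReal_min_div c L E hEpos]
    rw [Finset.sum_congr rfl (fun k _ => hterm k)]
    rw [← ENNReal.ofReal_sum_of_nonneg]
    · congr 1
      exact comb_aux (fun j => g j v) c hc0 hc1
    · intro k _
      apply div_nonneg _ (Nat.cast_nonneg _)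
      have : min c (#(univ.filter fun j => g j v < g k v) : ℝ)
          ≤ min c ((#(univ.filter fun j => g j v < g k v) : ℝ)
            + (#(univ.filter fun j => g j v = g k v) : ℝ)) :=
        min_le_min le_rfl (le_add_of_nonneg_right (Nat.cast_nonneg _))
      linarith
  -- put it together
  have hmain : ((n:ℝ≥0∞) + 1) * P {ω | U ω ≤ a} = ENNReal.ofReal c := by
    have h1 : ∑ k : Fin (n+1), (μ.prod ν) {p | G k p ≤ a}
        = ((n:ℝ≥0∞) + 1) * P {ω | U ω ≤ a} := by
      rw [Finset.sum_congr rfl (fun k _ => ((hXk k).symm.trans hX.symm : _))]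
      rw [Finset.sum_const, Finset.card_univ, Fintype.card_fin, nsmul_eq_mul]
      push_cast
      ring
    rw [← h1]
    have h2 : ∀ k : Fin (n+1), (μ.prod ν) {p | G k p ≤ a}
        = ∫⁻ v, ν {t | G k (v, t) ≤ a} ∂μ := by
      intro k
      rw [Measure.prod_apply (hGset k)]
      rfl
    rw [Finset.sum_congr rfl (fun k _ => h2 k)]
    rw [← lintegral_finset_sum]
    · rw [lintegral_congr hslice, lintegral_const, measure_univ, mul_one]
    · intro k _
      have : (fun v => ν {t | G k (v, t) ≤ a})
          = fun v => ν (Prod.mk v ⁻¹' {p | G k p ≤ a}) := rfl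
      rw [this]
      exact measurable_measure_prodMk_left (hGset k)
  -- divide by n+1
  have hofc : ENNReal.ofReal c = ((n:ℝ≥0∞) + 1) * ENNReal.ofReal a := by
    rw [hc, mul_comm, ENNReal.ofReal_mul (by positivity)]
    congr 1
    rw [ENNReal.ofReal_add (Nat.cast_nonneg _) zero_le_one, ENNReal.ofReal_natCast,
      ENNReal.ofReal_one]
  rw [hofc] at hmain
  have hne0 : ((n:ℝ≥0∞) + 1) ≠ 0 := by simp
  have hnetop : ((n:ℝ≥0∞) + 1) ≠ ⊤ := by
    simp [ENNReal.add_ne_top]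
  exact (ENNReal.mul_right_inj hne0 hnetop).1 hmain
end

section
/- Let $a_1, \ldots, a_{n+1}$ be exchangeable real-valued random variables that are almost surely distinct (no ties), and let $\tau \sim U[0,1]$ be independent of them. Then $\frac{1}{n+1}\left(|\{i \le n+1 : a_i < a_{n+1}\}| + \tau\right)$ is uniformly distributed on $[0,1]$. -/
open MeasureTheory ProbabilityTheory Finset
open scoped ENNReal

/-- Rank count: number of indices `i` with `x i < x j`. -/
noncomputable def Ncnt (n : ℕ) (j : Fin (n + 1)) (x : Fin (n + 1) → ℝ) : ℕ :=
  (Finset.univ.filter (fun i => x i < x j)).card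

lemma measurable_Ncnt (n : ℕ) (j : Fin (n + 1)) : Measurable (Ncnt n j) := by
  have h : Ncnt n j = fun x => ∑ i : Fin (n + 1), if x i < x j then 1 else 0 := by
    funext x; rw [Ncnt, Finset.card_filter]
  rw [h]
  exact Finset.measurable_sum _ fun i _ =>
    Measurable.ite (measurableSet_lt (measurable_pi_apply i) (measurable_pi_apply j))
      measurable_const measurable_const

lemma Ncnt_le (n : ℕ) (j : Fin (n + 1)) (x : Fin (n + 1) → ℝ) : Ncnt n j x ≤ n := by
  have hsub : (Finset.univ.filter (fun i => x i < x j)) ⊆ Finset.univ.erase j := by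
    intro i hi
    rcases Finset.mem_filter.mp hi with ⟨-, hlt⟩
    refine Finset.mem_erase.mpr ⟨?_, Finset.mem_univ i⟩
    rintro rfl; exact lt_irrefl _ hlt
  have := Finset.card_le_card hsub
  simpa [Finset.card_erase_of_mem, Ncnt] using this

lemma Ncnt_lt (n : ℕ) {j j' : Fin (n + 1)} {x : Fin (n + 1) → ℝ} (h : x j < x j') :
    Ncnt n j x < Ncnt n j' x := by
  apply Finset.card_lt_card
  constructor
  · intro i hi
    rcases Finset.mem_filter.mp hi with ⟨-, hlt⟩
    exact Finset.mem_filter.mpr ⟨Finset.mem_univ i, hlt.trans h⟩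
  · intro hsub
    have hj : j ∈ Finset.univ.filter (fun i => x i < x j') :=
      Finset.mem_filter.mpr ⟨Finset.mem_univ j, h⟩
    have := Finset.mem_filter.mp (hsub hj)
    exact lt_irrefl _ this.2

lemma Ncnt_injective (n : ℕ) {x : Fin (n + 1) → ℝ}
    (hd : ∀ i j : Fin (n + 1), i ≠ j → x i ≠ x j) :
    Function.Injective (fun j => Ncnt n j x) := by
  intro j j' h
  by_contra hne
  rcases (hd j j' hne).lt_or_gt with h' | h'
  · exact absurd h (Nat.ne_of_lt (Ncnt_lt n h'))
  · exact absurd h.symm (Nat.ne_of_lt (Ncnt_lt n h'))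

lemma Ncnt_surj (n : ℕ) {x : Fin (n + 1) → ℝ}
    (hd : ∀ i j : Fin (n + 1), i ≠ j → x i ≠ x j) {k : ℕ} (hk : k ≤ n) :
    ∃ j, Ncnt n j x = k := by
  have himg : Finset.univ.image (fun j => Ncnt n j x) = Finset.range (n + 1) := by
    apply Finset.eq_of_subset_of_card_le
    · intro m hm
      rcases Finset.mem_image.mp hm with ⟨j, -, rfl⟩
      exact Finset.mem_range.mpr (Nat.lt_succ_of_le (Ncnt_le n j x))
    · rw [Finset.card_range, Finset.card_image_of_injective _ (Ncnt_injective n hd)]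
      simp
  have : k ∈ Finset.univ.image (fun j => Ncnt n j x) := by
    rw [himg]; exact Finset.mem_range.mpr (Nat.lt_succ_of_le hk)
  rcases Finset.mem_image.mp this with ⟨j, -, hj⟩
  exact ⟨j, hj⟩

lemma Ncnt_comp_perm (n : ℕ) (π : Equiv.Perm (Fin (n + 1))) (j : Fin (n + 1))
    (x : Fin (n + 1) → ℝ) : Ncnt n j (fun i => x (π i)) = Ncnt n (π j) x := by
  unfold Ncnt
  apply Finset.card_bij' (fun i _ => π i) (fun i _ => π.symm i)
  · intro i hi
    rcases Finset.mem_filter.mp hi with ⟨-, hlt⟩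
    exact Finset.mem_filter.mpr ⟨Finset.mem_univ _, hlt⟩
  · intro i hi
    rcases Finset.mem_filter.mp hi with ⟨-, hlt⟩
    refine Finset.mem_filter.mpr ⟨Finset.mem_univ _, ?_⟩
    simpa using hlt
  · intro i _; simp
  · intro i _; simp

lemma sum_clamp (n : ℕ) : ∀ t : ℝ, 0 ≤ t → t ≤ n + 1 →
    ∑ k ∈ Finset.range (n + 1), min (max (t - k) 0) 1 = t := by
  induction n with
  | zero =>
    intro t h0 h1
    have h1' : t ≤ 1 := by push_cast at h1; linarith
    norm_num [Finset.sum_range_one, max_eq_left h0, min_eq_left h1']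
  | succ n ih =>
    intro t h0 h1
    rcases le_or_gt t (n + 1) with h | h
    · rw [Finset.sum_range_succ, ih t h0 h]
      have : t - ((n : ℝ) + 1) ≤ 0 := by push_cast; linarith
      rw [max_eq_right (by push_cast; linarith)]
      norm_num
    · rw [Finset.sum_range_succ']
      have h1' : (1 : ℝ) ≤ t := by
        have : (0:ℝ) ≤ n := Nat.cast_nonneg n
        linarith
      have hfirst : min (max (t - (0 : ℕ)) 0) 1 = 1 := by
        simp only [Nat.cast_zero, sub_zero]
        rw [max_eq_left h0, min_eq_right h1']
      have hrest : ∑ k ∈ Finset.range (n + 1), min (max (t - ((k : ℕ) + 1 : ℕ)) 0) 1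
          = t - 1 := by
        have := ih (t - 1) (by linarith) (by push_cast at h1 ⊢; linarith)
        rw [← this]
        apply Finset.sum_congr rfl
        intro k _
        congr 1
        push_cast
        ring_nf
      rw [hfirst, hrest]
      ring

/-- Tie-free validity of smoothed conformal p-values: for exchangeable,
almost surely distinct `a 0, …, a n` and an independent uniform `τ`,
`(|{i : a i < a n}| + τ)/(n+1)` is uniform on `[0,1]`. -/
theorem stmt_7 {Ω : Type*} [MeasurableSpace Ω] (P : Measure Ω) [IsProbabilityMeasure P]
    (n : ℕ) (a : Fin (n + 1) → Ω → ℝ) (ha : ∀ i, Measurable (a i))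
    (hexch : ∀ π : Equiv.Perm (Fin (n + 1)),
      Measure.map (fun ω => fun i => a (π i) ω) P = Measure.map (fun ω => fun i => a i ω) P)
    (hdistinct : ∀ i j : Fin (n + 1), i ≠ j → P {ω | a i ω = a j ω} = 0)
    (τ : Ω → ℝ) (hτ : Measurable τ)
    (hτunif : Measure.map τ P = volume.restrict (Set.Icc (0 : ℝ) 1))
    (hindep : IndepFun (fun ω => fun i => a i ω) τ P) :
    ∀ c : ℝ, c ∈ Set.Icc (0 : ℝ) 1 →
      P {ω | (((univ.filter (fun i => a i ω < a (Fin.last n) ω)).card : ℝ) + τ ω) / (n + 1)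
          ≤ c} = ENNReal.ofReal c := by
  intro c hc
  obtain ⟨hc0, hc1⟩ := hc
  set vec : Ω → (Fin (n + 1) → ℝ) := fun ω i => a i ω with hvecdef
  have hvecm : Measurable vec := measurable_pi_lambda _ ha
  set μ : Measure (Fin (n + 1) → ℝ) := Measure.map vec P with hμdef
  have hμprob : IsProbabilityMeasure μ := Measure.isProbabilityMeasure_map hvecm.aemeasurable
  -- exchangeability transported to μ
  have hmapμ : ∀ π : Equiv.Perm (Fin (n + 1)),
      Measure.map (fun x : Fin (n + 1) → ℝ => fun i => x (π i)) μ = μ := by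
    intro π
    have hTm : Measurable (fun x : Fin (n + 1) → ℝ => fun i => x (π i)) :=
      measurable_pi_lambda _ fun i => measurable_pi_apply _
    rw [hμdef, Measure.map_map hTm hvecm]
    exact hexch π
  have hEm : ∀ (j : Fin (n + 1)) (k : ℕ),
      MeasurableSet {x : Fin (n + 1) → ℝ | Ncnt n j x = k} :=
    fun j k => (measurable_Ncnt n j) (measurableSet_singleton k)
  -- all ranks equidistributed
  have hswap : ∀ (j : Fin (n + 1)) (k : ℕ),
      μ {x | Ncnt n j x = k} = μ {x | Ncnt n (Fin.last n) x = k} := by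
    intro j k
    set π := Equiv.swap (Fin.last n) j with hπ
    have hTm : Measurable (fun x : Fin (n + 1) → ℝ => fun i => x (π i)) :=
      measurable_pi_lambda _ fun i => measurable_pi_apply _
    have h1 : μ {x | Ncnt n (Fin.last n) x = k}
        = μ ((fun x : Fin (n + 1) → ℝ => fun i => x (π i)) ⁻¹' {x | Ncnt n (Fin.last n) x = k}) := by
      conv_lhs => rw [← hmapμ π]
      rw [Measure.map_apply hTm (hEm _ k)]
    have h2 : ((fun x : Fin (n + 1) → ℝ => fun i => x (π i)) ⁻¹' {x | Ncnt n (Fin.last n) x = k})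
        = {x | Ncnt n j x = k} := by
      ext x
      simp only [Set.mem_preimage, Set.mem_setOf_eq]
      rw [Ncnt_comp_perm n π (Fin.last n) x, hπ, Equiv.swap_apply_left]
    rw [h1, h2]
  -- the set of tie-free vectors
  set D : Set (Fin (n + 1) → ℝ) := {x | ∀ i j : Fin (n + 1), i ≠ j → x i ≠ x j} with hDdef
  have hDm : MeasurableSet D := by
    have : D = ⋂ (i) (j) (_ : i ≠ j), {x : Fin (n + 1) → ℝ | x i = x j}ᶜ := by
      ext x; simp [hDdef]
    rw [this]
    exact MeasurableSet.iInter fun i => MeasurableSet.iInter fun j =>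
      MeasurableSet.iInter fun _ =>
        (measurableSet_eq_fun (measurable_pi_apply i) (measurable_pi_apply j)).compl
  have hDc : μ Dᶜ = 0 := by
    have hsub : Dᶜ ⊆ ⋃ (i) (j) (_ : i ≠ j), {x : Fin (n + 1) → ℝ | x i = x j} := by
      intro x hx
      simp only [hDdef, Set.mem_compl_iff, Set.mem_setOf_eq, not_forall] at hx
      rcases hx with ⟨i, j, hij, hxij⟩
      simp only [Set.mem_iUnion]
      exact ⟨i, j, hij, not_not.mp hxij⟩
    apply measure_mono_null hsub
    refine measure_iUnion_null fun i => measure_iUnion_null fun j => measure_iUnion_null fun hij => ?_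
    rw [hμdef, Measure.map_apply hvecm
      (measurableSet_eq_fun (measurable_pi_apply i) (measurable_pi_apply j))]
    have : vec ⁻¹' {x : Fin (n + 1) → ℝ | x i = x j} = {ω | a i ω = a j ω} := rfl
    rw [this]
    exact hdistinct i j hij
  have hD1 : μ D = 1 := (prob_compl_eq_zero_iff hDm).mp hDc
  -- sum over ranks is 1
  have hsum1 : ∀ k : ℕ, k ≤ n → ∑ j : Fin (n + 1), μ {x | Ncnt n j x = k} = 1 := by
    intro k hk
    have heq : ∀ j : Fin (n + 1),
        μ {x | Ncnt n j x = k} = μ ({x | Ncnt n j x = k} ∩ D) :=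
      fun j => (measure_inter_conull hDc).symm
    have hdisj : Pairwise (Function.onFun Disjoint
        (fun j => {x : Fin (n + 1) → ℝ | Ncnt n j x = k} ∩ D)) := by
      intro j j' hjj'
      refine Set.disjoint_left.mpr fun x hx hx' => ?_
      have hxD : x ∈ D := hx.2
      have : Ncnt n j x = Ncnt n j' x := by rw [hx.1, hx'.1]
      exact hjj' (Ncnt_injective n hxD this)
    have hcover : (⋃ j, ({x : Fin (n + 1) → ℝ | Ncnt n j x = k} ∩ D)) = D := by
      ext x
      constructor
      · rintro ⟨s, ⟨j, rfl⟩, hx⟩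
        exact hx.2
      · intro hx
        rcases Ncnt_surj n hx hk with ⟨j, hj⟩
        exact Set.mem_iUnion.mpr ⟨j, hj, hx⟩
    calc ∑ j : Fin (n + 1), μ {x | Ncnt n j x = k}
        = ∑ j : Fin (n + 1), μ ({x | Ncnt n j x = k} ∩ D) := by
          exact Finset.sum_congr rfl fun j _ => heq j
      _ = ∑' j : Fin (n + 1), μ ({x | Ncnt n j x = k} ∩ D) := (tsum_fintype _).symm
      _ = μ (⋃ j, ({x : Fin (n + 1) → ℝ | Ncnt n j x = k} ∩ D)) :=
          (measure_iUnion hdisj fun j => (hEm j k).inter hDm).symm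
      _ = 1 := by rw [hcover, hD1]
  -- each rank has probability 1/(n+1)
  have hunif : ∀ k : ℕ, k ≤ n →
      μ {x | Ncnt n (Fin.last n) x = k} = ((n : ℝ≥0∞) + 1)⁻¹ := by
    intro k hk
    have h := hsum1 k hk
    rw [Finset.sum_congr rfl (fun j _ => hswap j k)] at h
    rw [Finset.sum_const, Finset.card_univ, Fintype.card_fin] at h
    have hne : ((n : ℝ≥0∞) + 1) ≠ 0 := by simp
    have hnt : ((n : ℝ≥0∞) + 1) ≠ ⊤ := by simp
    have : ((n : ℝ≥0∞) + 1) * μ {x | Ncnt n (Fin.last n) x = k} = 1 := by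
      have h2 : ((n + 1 : ℕ) : ℝ≥0∞) * μ {x | Ncnt n (Fin.last n) x = k} = 1 := by
        rw [← nsmul_eq_mul]; exact h
      rw [Nat.cast_add, Nat.cast_one] at h2; exact h2
    calc μ {x | Ncnt n (Fin.last n) x = k}
        = ((n : ℝ≥0∞) + 1)⁻¹ * (((n : ℝ≥0∞) + 1) * μ {x | Ncnt n (Fin.last n) x = k}) := by
          rw [← mul_assoc, ENNReal.inv_mul_cancel hne hnt, one_mul]
      _ = ((n : ℝ≥0∞) + 1)⁻¹ := by rw [this, mul_one]
  -- the rank random variable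
  set R : Ω → ℕ := fun ω => Ncnt n (Fin.last n) (vec ω) with hRdef
  have hRm : Measurable R := (measurable_Ncnt n _).comp hvecm
  have hRindep : IndepFun R τ P := hindep.comp (measurable_Ncnt n _) measurable_id
  have hRval : ∀ k : ℕ, k ≤ n → P (R ⁻¹' {k}) = ((n : ℝ≥0∞) + 1)⁻¹ := by
    intro k hk
    have : R ⁻¹' {k} = vec ⁻¹' {x | Ncnt n (Fin.last n) x = k} := rfl
    rw [this, ← Measure.map_apply hvecm (hEm _ k), ← hμdef]
    exact hunif k hk
  -- uniform cdf of τ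
  have hτcdf : ∀ s : ℝ, P (τ ⁻¹' Set.Iic s) = ENNReal.ofReal (min (max s 0) 1) := by
    intro s
    rw [← Measure.map_apply hτ measurableSet_Iic, hτunif,
      Measure.restrict_apply measurableSet_Iic]
    have : Set.Iic s ∩ Set.Icc (0 : ℝ) 1 = Set.Icc 0 (min s 1) := by
      ext x
      simp only [Set.mem_inter_iff, Set.mem_Iic, Set.mem_Icc, le_min_iff]
      tauto
    rw [this, Real.volume_Icc]
    rcases le_or_gt 0 s with h | h
    · rw [max_eq_left h]; ring_nf
    · rw [max_eq_right h.le]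
      have h1 : min s 1 ≤ s := min_le_left _ _
      rw [ENNReal.ofReal_eq_zero.mpr (by linarith), min_eq_left (by norm_num : (0:ℝ) ≤ 1)]
      simp
  -- decompose the event
  have hnpos : (0 : ℝ) < (n : ℝ) + 1 := by positivity
  have hsetEq : {ω | (((univ.filter (fun i => a i ω < a (Fin.last n) ω)).card : ℝ) + τ ω) / (n + 1)
      ≤ c} = ⋃ k ∈ Finset.range (n + 1), (R ⁻¹' {k} ∩ τ ⁻¹' Set.Iic (c * ((n : ℝ) + 1) - k)) := by
    ext ω
    have hRω : ((univ.filter (fun i => a i ω < a (Fin.last n) ω)).card : ℕ) = R ω := rfl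
    simp only [Set.mem_setOf_eq, Set.mem_iUnion, Set.mem_inter_iff, Set.mem_preimage,
      Set.mem_singleton_iff, Set.mem_Iic, Finset.mem_range]
    constructor
    · intro h
      refine ⟨R ω, Nat.lt_succ_of_le (Ncnt_le n _ _), rfl, ?_⟩
      rw [div_le_iff₀ hnpos, hRω] at h
      linarith
    · rintro ⟨k, -, hk, hτk⟩
      rw [div_le_iff₀ hnpos, hRω, hk]
      linarith
  rw [hsetEq]
  have hdisj2 : (↑(Finset.range (n + 1)) : Set ℕ).PairwiseDisjoint
      (fun k => R ⁻¹' {k} ∩ τ ⁻¹' Set.Iic (c * ((n : ℝ) + 1) - k)) := by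
    intro k _ k' _ hkk'
    refine Set.disjoint_left.mpr fun ω hω hω' => ?_
    exact hkk' (hω.1.symm.trans hω'.1)
  rw [measure_biUnion_finset hdisj2 (fun k _ =>
    (hRm (measurableSet_singleton k)).inter (hτ measurableSet_Iic))]
  have hterm : ∀ k ∈ Finset.range (n + 1),
      P (R ⁻¹' {k} ∩ τ ⁻¹' Set.Iic (c * ((n : ℝ) + 1) - k))
      = ((n : ℝ≥0∞) + 1)⁻¹ * ENNReal.ofReal (min (max (c * ((n : ℝ) + 1) - k) 0) 1) := by
    intro k hk
    rw [hRindep.measure_inter_preimage_eq_mul _ _ (measurableSet_singleton k) measurableSet_Iic,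
      hRval k (Nat.lt_succ_iff.mp (Finset.mem_range.mp hk)), hτcdf]
  rw [Finset.sum_congr rfl hterm, ← Finset.mul_sum]
  have hsumval : ∑ k ∈ Finset.range (n + 1),
      ENNReal.ofReal (min (max (c * ((n : ℝ) + 1) - k) 0) 1)
      = ENNReal.ofReal (c * ((n : ℝ) + 1)) := by
    rw [← ENNReal.ofReal_sum_of_nonneg (fun k _ => le_min (le_max_right _ _) zero_le_one)]
    congr 1
    exact sum_clamp n (c * ((n : ℝ) + 1)) (by positivity) (by nlinarith)
  rw [hsumval, ENNReal.ofReal_mul hc0]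
  have : ENNReal.ofReal ((n : ℝ) + 1) = (n : ℝ≥0∞) + 1 := by
    rw [ENNReal.ofReal_add (Nat.cast_nonneg n) zero_le_one, ENNReal.ofReal_natCast,
      ENNReal.ofReal_one]
  rw [this, mul_comm (ENNReal.ofReal c), ← mul_assoc,
    ENNReal.inv_mul_cancel (by simp) (by simp), one_mul]
end

section
/- Consider a sample of two observations: with probability $1/2$ the data sequence is $((x^{-1},-1),(x^{1},1))$ and with probability $1/2$ it is $((x^{1},1),(x^{-1},-1))$, where $x^{-1} \ne x^{1}$ are two distinct predictors; this measure on pairs is exchangeable. Define the conformity measure $A((x_1,y_1),(x_2,y_2)) = y_2$ if $x_2 = x^{1}$ and $A((x_1,y_1),(x_2,y_2)) = 3y_2 + 2$ if $x_2 = x^{-1}$, and let $Q$ be the corresponding conformal transducer with $n = 1$ training observation. Then for the postulated response $y = 0$, the expected value of $Q(z_1, (x_2, 0), \tau)$ (over the data and independent $\tau \sim U[0,1]$) equals $3/4$, while $P(y_2 \le 0) = 1/2$. Hence this conformal predictive system is not marginally calibrated. -/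
open MeasureTheory
open scoped Classical

lemma integ_aux : (∫ τ in Set.Icc (0 : ℝ) 1, (1 + τ * (0 + 1)) / 2) = 3 / 4 := by
  rw [MeasureTheory.integral_Icc_eq_integral_Ioc,
    ← intervalIntegral.integral_of_le (by norm_num : (0:ℝ) ≤ 1)]
  have : (∫ τ in (0:ℝ)..1, (1 + τ * (0 + 1)) / 2) = ∫ τ in (0:ℝ)..1, (1 + τ) / 2 := by
    congr 1; ext τ; ring
  rw [this]
  have h : (∫ τ in (0:ℝ)..1, (1 + τ) / 2)
      = (∫ τ in (0:ℝ)..1, (1:ℝ) + τ) / 2 := by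
    rw [← intervalIntegral.integral_div]
  have h2 : (∫ τ in (0:ℝ)..1, (1:ℝ) + τ)
      = (∫ τ in (0:ℝ)..1, (1:ℝ)) + ∫ τ in (0:ℝ)..1, τ :=
    intervalIntegral.integral_add intervalIntegrable_const
      intervalIntegral.intervalIntegrable_id
  simp [h, h2, integral_id]
  norm_num

/-- Conformal predictive systems need not be marginally calibrated under
exchangeability: with data equally likely `((x⁻¹,-1),(x¹,1))` or
`((x¹,1),(x⁻¹,-1))` and the conformity measure `A((x₁,y₁),(x₂,y₂)) = y₂` if
`x₂ = x¹` and `3y₂+2` if `x₂ = x⁻¹`, the expectation of the conformal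
transducer at the postulated response `y = 0` is `3/4`, while
`P(y₂ ≤ 0) = 1/2 ≠ 3/4`. -/
theorem stmt_14 {X : Type*} (xm xp : X) (hne : xm ≠ xp)
    (A : X × ℝ → X × ℝ → ℝ)
    (hA : ∀ z w : X × ℝ, A z w = if w.1 = xp then w.2 else 3 * w.2 + 2)
    (Q : X × ℝ → X → ℝ → ℝ → ℝ)
    (hQ : ∀ (z₁ : X × ℝ) (x : X) (y τ : ℝ),
      Q z₁ x y τ = ((if A (x, y) z₁ < A z₁ (x, y) then (1 : ℝ) else 0) +
        τ * ((if A (x, y) z₁ = A z₁ (x, y) then (1 : ℝ) else 0) + 1)) / 2) :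
    (1 / 2) * (∫ τ in Set.Icc (0 : ℝ) 1, Q (xm, -1) xp 0 τ) +
      (1 / 2) * (∫ τ in Set.Icc (0 : ℝ) 1, Q (xp, 1) xm 0 τ) = 3 / 4 ∧
    (1 / 2 : ℝ) * (if (1 : ℝ) ≤ 0 then 1 else 0) +
      (1 / 2) * (if (-1 : ℝ) ≤ 0 then 1 else 0) = 1 / 2 ∧
    (3 / 4 : ℝ) ≠ 1 / 2 := by
  refine ⟨?_, by norm_num, by norm_num⟩
  have h1 : ∀ τ : ℝ, Q (xm, -1) xp 0 τ = (1 + τ * (0 + 1)) / 2 := by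
    intro τ
    rw [hQ, hA, hA]
    simp [hne]
    norm_num
  have h2 : ∀ τ : ℝ, Q (xp, 1) xm 0 τ = (1 + τ * (0 + 1)) / 2 := by
    intro τ
    rw [hQ, hA, hA]
    simp [hne, hne.symm]
  simp only [h1, h2, integ_aux]
  norm_num
end

section
/- In the same setting as the previous counterexample but with the two observations drawn independently (i.e., each of the two observations is independently $(x^{-1},-1)$ or $(x^{1},1)$ with probability $1/2$ each), the expected value of the conformal transducer $Q(z_1,(x_2,0),\tau)$ at postulated response $y = 0$ equals $5/8$, whereas $P(y_2 \le 0) = 1/2$. Hence conformal predictive systems need not be marginally calibrated even under the IID model. -/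
open MeasureTheory
open scoped Classical

lemma aux_int (a : ℝ) : (∫ τ in Set.Icc (0 : ℝ) 1, (a + τ * 1) / 2) = a / 2 + 1 / 4 := by
  rw [MeasureTheory.integral_Icc_eq_integral_Ioc,
    ← intervalIntegral.integral_of_le (by norm_num : (0:ℝ) ≤ 1)]
  have : (∫ τ in (0:ℝ)..1, (a + τ * 1) / 2) = ∫ τ in (0:ℝ)..1, (a/2 + τ * (1/2)) := by
    congr 1; funext τ; ring
  rw [this]
  simp [intervalIntegral.integral_add ((intervalIntegrable_const (c := a/2))) (((continuous_id.mul continuous_const).intervalIntegrable 0 1)),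
    intervalIntegral.integral_mul_const,
    intervalIntegrable_const,
    (continuous_id.mul continuous_const).intervalIntegrable]
  ring

/-- Conformal predictive systems need not be marginally calibrated even under
the IID model: with the two observations independently equal to `(x⁻¹,-1)` or
`(x¹,1)` with probability `1/2` each (four equally likely data sequences) and
the conformity measure of the previous example, the expectation of the
conformal transducer at the postulated response `y = 0` is `5/8`, while
`P(y₂ ≤ 0) = 1/2 ≠ 5/8`. -/
theorem stmt_15 {X : Type*} (xm xp : X) (hne : xm ≠ xp)
    (A : X × ℝ → X × ℝ → ℝ)
    (hA : ∀ z w : X × ℝ, A z w = if w.1 = xp then w.2 else 3 * w.2 + 2)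
    (Q : X × ℝ → X → ℝ → ℝ → ℝ)
    (hQ : ∀ (z₁ : X × ℝ) (x : X) (y τ : ℝ),
      Q z₁ x y τ = ((if A (x, y) z₁ < A z₁ (x, y) then (1 : ℝ) else 0) +
        τ * ((if A (x, y) z₁ = A z₁ (x, y) then (1 : ℝ) else 0) + 1)) / 2) :
    (1 / 4) * (∫ τ in Set.Icc (0 : ℝ) 1, Q (xm, -1) xp 0 τ) +
      (1 / 4) * (∫ τ in Set.Icc (0 : ℝ) 1, Q (xp, 1) xm 0 τ) +
      (1 / 4) * (∫ τ in Set.Icc (0 : ℝ) 1, Q (xm, -1) xm 0 τ) +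
      (1 / 4) * (∫ τ in Set.Icc (0 : ℝ) 1, Q (xp, 1) xp 0 τ) = 5 / 8 ∧
    (1 / 2 : ℝ) * (if (1 : ℝ) ≤ 0 then 1 else 0) +
      (1 / 2) * (if (-1 : ℝ) ≤ 0 then 1 else 0) = 1 / 2 ∧
    (5 / 8 : ℝ) ≠ 1 / 2 := by
  refine ⟨?_, by norm_num, by norm_num⟩
  have h1 : ∀ τ : ℝ, Q (xm, -1) xp 0 τ = (1 + τ * 1) / 2 := by
    intro τ; rw [hQ]; simp [hA, hne]; norm_num
  have h2 : ∀ τ : ℝ, Q (xp, 1) xm 0 τ = (1 + τ * 1) / 2 := by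
    intro τ; rw [hQ]; simp [hA, hne]
  have h3 : ∀ τ : ℝ, Q (xm, -1) xm 0 τ = (1 + τ * 1) / 2 := by
    intro τ; rw [hQ]; simp [hA, hne]
  have h4 : ∀ τ : ℝ, Q (xp, 1) xp 0 τ = (0 + τ * 1) / 2 := by
    intro τ; rw [hQ]; simp [hA, hne]
  simp only [funext h1, funext h2, funext h3, funext h4]
  rw [aux_int 1, aux_int 0]
  norm_num
end
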